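/- For nonnegative reals α_ii^[l] indexed by pairs (l,i), suppose the TIN BC-type condition holds: for all i and all l' < l, either α_ii^[l] ≥ α_ij^[l] + α_ii^[l'] or α_ii^[l] ≥ 2α_ij^[l] + α_ii^[l'] - α_ij^[l'] (for all j ≠ i), and the TIN IC-type condition holds: α_ii^[1] ≥ α_ij^[1] + α_ki^[l_k] for all j,k ≠ i and all l_k, where users in each cell are ordered so that α_ii^[1] ≤ α_ii^[2] ≤ ⋯. Then for every user index l_i in cell i and every user l_k in cell k ≠ i and every j ≠ i, one has α_ii^[l_i] ≥ α_ij^[l_i] + α_ki^[l_k]. -/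
import Mathlib


/-- equation (34), Remark 4: in a `K`-cell network with channel strengths
`α k l i = α_{ki}^{[l]}` (strength from BS-`i` to user `l` of cell `k`), users in each cell
ordered by ascending direct strength, the TIN-regime conditions (BC-type chain condition plus
IC-type condition imposed on the weakest user of each cell) imply the IC-type condition
`α_{ii}^{[l_i]} ≥ α_{ij}^{[l_i]} + α_{ki}^{[l_k]}` for every user of every cell. -/
theorem stmt2 (K : ℕ) (L : Fin K → ℕ) (hL : ∀ k, 0 < L k)
    (α : (k : Fin K) → Fin (L k) → Fin K → ℝ)
    (hnonneg : ∀ k l i, 0 ≤ α k l i)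
    (hsorted : ∀ k, ∀ l l' : Fin (L k), l ≤ l' → α k l k ≤ α k l' k)
    (hBC : ∀ i : Fin K, ∀ l' l : Fin (L i), l' < l → ∀ j : Fin K, j ≠ i →
      (α i l i ≥ α i l j + α i l' i ∨ α i l i ≥ 2 * α i l j + α i l' i - α i l' j))
    (hIC : ∀ i j k : Fin K, i ≠ j → i ≠ k → ∀ lk : Fin (L k),
      α i ⟨0, hL i⟩ i ≥ α i ⟨0, hL i⟩ j + α k lk i) :
    ∀ i j k : Fin K, i ≠ j → i ≠ k → ∀ li : Fin (L i), ∀ lk : Fin (L k),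
      α i li i ≥ α i li j + α k lk i := by
  intro i j k hij hik li lk
  have hic := hIC i j k hij hik lk
  by_cases h : (li : ℕ) = 0
  · have : li = ⟨0, hL i⟩ := Fin.ext h
    rw [this]; exact hic
  · have h0 : (⟨0, hL i⟩ : Fin (L i)) < li := by
      simp [Fin.lt_def]; exact Nat.pos_of_ne_zero h
    have h1 := hnonneg i li j
    have h2 := hnonneg k lk i
    rcases hBC i ⟨0, hL i⟩ li h0 j hij.symm with hb | hb
    · have := hnonneg i ⟨0, hL i⟩ j
      linarith
    · linarith
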